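/- Define the Fourier transform F : A₋₁,₀ → N by F(a) = γ(w₋₁* a w₁) = w₋₃* γ(a) w₋₁, where w₋₃ = γ(w₋₁). Then for every a ∈ A₋₁,₀, F(a) lies in the relative commutant A₋₂,₋₁ = N ∩ γ(N)'. -/
import Mathlib


/-- The Fourier transform `F(a) = γ(w₋₁* a w₁) = w₋₃* γ(a) w₋₁`
(with `w₋₃ = γ(w₋₁)`) maps `A₋₁,₀ = M ∩ γ(M)'` into the relative commutant
`A₋₂,₋₁ = N ∩ γ(N)'`. (`wm1 = w₋₁`, `w1 = w₁`.) -/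
theorem fourier_transform_range
    {B : Type*} [Ring B] [StarRing B] [Algebra ℂ B] [StarModule ℂ B]
    (M N : StarSubalgebra ℂ B) (hNM : N ≤ M)
    (γ : B →⋆ₐ[ℂ] B) (hγM : ∀ m ∈ M, γ m ∈ N)
    (wm1 w1 : B) (hwN : wm1 ∈ N) (hiso : star wm1 * wm1 = 1)
    (hintN : ∀ n ∈ N, wm1 * n = γ n * wm1)
    (hγw1 : γ w1 = wm1) (hiso1 : star w1 * w1 = 1)
    (hintM : ∀ m ∈ M, w1 * m = γ m * w1) :
    ∀ a ∈ M, (∀ m ∈ M, a * γ m = γ m * a) →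
      (γ (star wm1 * a * w1) = star (γ wm1) * γ a * wm1 ∧
       γ (star wm1 * a * w1) ∈ N ∧
       ∀ n ∈ N, γ (star wm1 * a * w1) * γ n = γ n * γ (star wm1 * a * w1)) := by
  intro a haM hcomm
  have hwM : wm1 ∈ M := hNM hwN
  have hg1 : γ (star wm1 * a * w1) = star (γ wm1) * γ a * wm1 := by
    rw [map_mul, map_mul, map_star, hγw1]
  refine ⟨hg1, ?_, ?_⟩
  · rw [hg1]
    exact mul_mem (mul_mem (star_mem (hγM wm1 hwM)) (hγM a haM)) hwN
  · intro n hn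
    have hnM : n ∈ M := hNM hn
    have hγnN : γ n ∈ N := hγM n hnM
    have h1 : wm1 * γ n = γ (γ n) * wm1 := hintN (γ n) hγnN
    have h2 : γ a * γ (γ n) = γ (γ n) * γ a := by
      rw [← map_mul, ← map_mul, hcomm n hnM]
    have h3 : γ n * star (γ wm1) = star (γ wm1) * γ (γ n) := by
      have h := congrArg γ (hintN (star n) (star_mem hn))
      rw [map_mul, map_mul] at h
      have h' := congrArg star h
      simpa [map_star] using h'
    rw [hg1]
    calc star (γ wm1) * γ a * wm1 * γ n
        = star (γ wm1) * γ a * (wm1 * γ n) := by rw [mul_assoc]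
      _ = star (γ wm1) * (γ a * γ (γ n)) * wm1 := by
          rw [h1, ← mul_assoc, mul_assoc (star (γ wm1))]
      _ = star (γ wm1) * γ (γ n) * (γ a * wm1) := by
          rw [h2, ← mul_assoc, mul_assoc]
      _ = γ n * star (γ wm1) * (γ a * wm1) := by rw [← h3]
      _ = γ n * (star (γ wm1) * γ a * wm1) := by
          rw [mul_assoc, ← mul_assoc (star (γ wm1))]
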